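/- Let S¹ = {z ∈ ℂ : |z| = 1} and D = {z ∈ ℂ : |z| ≤ 1}. Let φ₀ and φ₁ be homeomorphisms of S¹ × D onto itself that commute with the first projection, i.e. φ_k(θ, z) = (θ, φ̲_k(θ, z)), and that map the torus S¹ × S¹ onto itself. Assume the restrictions of φ₀ and φ₁ to S¹ × S¹ are each homotopic to the identity of S¹ × S¹. Then there exists a homeomorphism Φ of [0,1] × S¹ × D onto itself that commutes with the first two projections, i.e. Φ(t, θ, z) = (t, θ, Φ̲_t(θ, z)), such that Φ̲₀ = φ̲₀, Φ̲₁ = φ̲₁, and Φ̲_t(θ, z) = z for all t ∈ [1/3, 2/3] and all (θ, z) ∈ S¹ × D. -/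

import Mathlib

/-- The unit circle `S¹ ⊆ ℂ`. -/
abbrev S1 : Set ℂ := Metric.sphere 0 1

/-- The closed unit disc `D ⊆ ℂ`. -/
abbrev Disk : Set ℂ := Metric.closedBall 0 1

/-- The inclusion of the torus `S¹ × S¹` into `S¹ × D`. -/
def torusIncl (q : ↥S1 × ↥S1) : ↥S1 × ↥Disk :=
  (q.1, ⟨(q.2 : ℂ), Metric.sphere_subset_closedBall q.2.2⟩)

open Complex

noncomputable def Complex.abs : AbsoluteValue ℂ ℝ := NormedField.toAbsoluteValue ℂ
@[simp] lemma Complex.abs_apply (z : ℂ) : Complex.abs z = ‖z‖ := rfl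
lemma Complex.norm_eq_abs (z : ℂ) : ‖z‖ = Complex.abs z := rfl
lemma Complex.abs_ofReal (r : ℝ) : Complex.abs (r : ℂ) = |r| := Complex.norm_real r
lemma Complex.continuous_abs : Continuous Complex.abs := continuous_norm
lemma Complex.sq_abs (z : ℂ) : Complex.abs z ^ 2 = Complex.normSq z := Complex.sq_norm z
lemma Complex.abs_exp (z : ℂ) : Complex.abs (Complex.exp z) = Real.exp z.re := Complex.norm_exp z
lemma Complex.abs_mul_exp_arg_mul_I (x : ℂ) :
    ↑(Complex.abs x) * Complex.exp (↑(Complex.arg x) * I) = x := Complex.norm_mul_exp_arg_mul_I x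

noncomputable def ee (x : ℝ) : ℂ := Complex.exp (x * (2 * Real.pi * I))
lemma ee_cont : Continuous ee := by unfold ee; fun_prop
lemma ee_abs (x : ℝ) : Complex.abs (ee x) = 1 := by simp [ee, Complex.abs_exp, Complex.norm_exp]
lemma ee_ne (x : ℝ) : ee x ≠ 0 := by
  intro h; have := ee_abs x; rw [h] at this; simp at this
lemma ee_add (x y : ℝ) : ee (x + y) = ee x * ee y := by
  simp [ee, ← Complex.exp_add]; ring_nf
lemma ee_eq_ee {x y : ℝ} (h : ee x = ee y) : ∃ n : ℤ, x = y + n := by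
  rw [ee, ee, Complex.exp_eq_exp_iff_exists_int] at h
  obtain ⟨n, hn⟩ := h
  refine ⟨n, ?_⟩
  have h2 : (2 * (Real.pi:ℂ) * I) ≠ 0 := by simp [Real.pi_ne_zero, Complex.I_ne_zero]
  have : ((x : ℂ) - y - n) * (2 * Real.pi * I) = 0 := by linear_combination hn
  rcases mul_eq_zero.1 this with h | h
  · have : (x:ℂ) = y + n := by linear_combination h
    exact_mod_cast this
  · exact absurd h h2
lemma ee_int (k : ℤ) : ee k = 1 := by
  rw [ee, Complex.exp_eq_one_iff]; exact ⟨k, by push_cast; ring⟩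
lemma ee_add_int (x : ℝ) (k : ℤ) : ee (x + k) = ee x := by
  rw [ee_add, ee_int, mul_one]
lemma ee_surj (w : ℂ) (hw : Complex.abs w = 1) : ee (Complex.arg w / (2*Real.pi)) = w := by
  have : (↑(Complex.arg w / (2*Real.pi)) : ℂ) * (2 * Real.pi * I) = Complex.arg w * I := by
    have hπ : ((Real.pi:ℂ)) ≠ 0 := by exact_mod_cast Real.pi_ne_zero
    push_cast; field_simp
  rw [ee, this]
  have := Complex.abs_mul_exp_arg_mul_I w
  rwa [hw, ofReal_one, one_mul] at this


lemma mem_S1_iff (z : ℂ) : z ∈ S1 ↔ Complex.abs z = 1 := by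
  simp [Complex.dist_eq]
lemma mem_Disk_iff (z : ℂ) : z ∈ Disk ↔ Complex.abs z ≤ 1 := by
  simp [Complex.dist_eq]
lemma S1_abs (w : ↥S1) : Complex.abs (w : ℂ) = 1 := (mem_S1_iff _).1 w.2
lemma S1_ne (w : ↥S1) : (w : ℂ) ≠ 0 := by
  intro h; have := S1_abs w; rw [h] at this; simp at this
lemma Disk_abs (z : ↥Disk) : Complex.abs (z : ℂ) ≤ 1 := (mem_Disk_iff _).1 z.2

noncomputable def eC (x : ℝ) : ↥S1 := ⟨ee x, (mem_S1_iff _).2 (ee_abs x)⟩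
lemma eC_cont : Continuous eC := ee_cont.subtype_mk _
lemma eC_surj (w : ↥S1) : ∃ x : ℝ, eC x = w :=
  ⟨Complex.arg (w:ℂ) / (2*Real.pi), Subtype.ext (ee_surj _ (S1_abs w))⟩
lemma eC_add_int (x : ℝ) (k : ℤ) : eC (x + k) = eC x := Subtype.ext (ee_add_int x k)

-- telescoping product
lemma telescope (a : ℕ → ℂ) (ha : ∀ j, a j ≠ 0) (m : ℕ) :
    ∏ j ∈ Finset.range m, a j / a (j+1) = a 0 / a m := by
  induction m with
  | zero => simp [div_self (ha 0)]
  | succ m ih =>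
    rw [Finset.prod_range_succ, ih, div_mul_div_comm, mul_comm (a 0) (a m),
      mul_div_mul_left _ _ (ha m)]

lemma re_pos_of_close (ρ : ℂ) (h1 : Complex.abs ρ = 1) (h2 : Complex.abs (ρ - 1) < 1) :
    0 < ρ.re := by
  have e1 : Complex.normSq ρ = 1 := by
    rw [← Complex.sq_abs, h1]; norm_num
  have e2 : Complex.normSq (ρ - 1) < 1 := by
    rw [← Complex.sq_abs]; nlinarith [Complex.abs.nonneg (ρ - 1)]
  simp [Complex.normSq_apply] at e1 e2
  nlinarith

theorem exists_lift (φ : (↥S1 × ↥Disk) ≃ₜ (↥S1 × ↥Disk))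
    (hh : ∃ ψ : C(↥S1 × ↥S1, ↥S1 × ↥S1),
      (∀ q, torusIncl (ψ q) = φ (torusIncl q)) ∧
      ψ.Homotopic (ContinuousMap.id _)) :
    ∃ H : (↥S1 × ↥S1) → ℝ, Continuous H ∧
      ∀ q, ((φ (torusIncl q)).2 : ℂ) = (q.2 : ℂ) * ee (H q) := by
  obtain ⟨ψ, hψ, ⟨K⟩⟩ := hh
  -- the quotient map k
  set k : unitInterval × (↥S1 × ↥S1) → ℂ := fun a => ((K a).2 : ℂ) / (a.2.2 : ℂ) with hk
  have hkcont : Continuous k := by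
    apply Continuous.div
    · exact continuous_subtype_val.comp (continuous_snd.comp K.continuous)
    · exact continuous_subtype_val.comp (continuous_snd.comp continuous_snd)
    · exact fun a => S1_ne a.2.2
  have hkabs : ∀ a, Complex.abs (k a) = 1 := by
    intro a
    rw [hk]
    simp only [map_div₀, S1_abs]
    simp
  have hkne : ∀ a, k a ≠ 0 := by
    intro a h; have := hkabs a; rw [h] at this; simp at this
  have huc : UniformContinuous k := CompactSpace.uniformContinuous_of_continuous hkcont
  obtain ⟨δ, hδ, hδ'⟩ := Metric.uniformContinuous_iff.1 huc 1 one_pos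
  obtain ⟨n, hn⟩ := exists_nat_gt (1/δ)
  have hn0 : 0 < (n:ℝ) := lt_trans (by positivity) hn
  have hinv : (1:ℝ)/n < δ := by
    rw [div_lt_iff₀ hn0]
    rw [div_lt_iff₀ hδ] at hn
    linarith [mul_comm δ (n:ℝ) ▸ hn]
  -- subdivision points
  set u : ℕ → unitInterval := fun j => Set.projIcc 0 1 zero_le_one ((j:ℝ)/n) with hu
  have hucoe : ∀ j : ℕ, j ≤ n → ((u j : ℝ)) = (j:ℝ)/n := by
    intro j hj
    rw [hu]
    simp only
    rw [Set.projIcc_of_mem]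
    constructor
    · positivity
    · rw [div_le_one hn0]; exact_mod_cast hj
  set v : ℕ → (↥S1 × ↥S1) → ℂ := fun j q => k (u j, q) with hv
  have hvabs : ∀ j q, Complex.abs (v j q) = 1 := fun j q => hkabs _
  have hvne : ∀ j q, v j q ≠ 0 := fun j q => hkne _
  set ρ : ℕ → (↥S1 × ↥S1) → ℂ := fun j q => v j q / v (j+1) q with hρ
  have hρabs : ∀ j q, Complex.abs (ρ j q) = 1 := by
    intro j q; rw [hρ]; simp [map_div₀, hvabs]
  have hρre : ∀ j q, j < n → 0 < (ρ j q).re := by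
    intro j q hj
    apply re_pos_of_close _ (hρabs j q)
    have hd : dist (v j q) (v (j+1) q) < 1 := by
      apply hδ'
      rw [Prod.dist_eq]
      simp only [dist_self, max_eq_left dist_nonneg]
      have : dist (u j) (u (j+1)) = 1/(n:ℝ) := by
        rw [Subtype.dist_eq, hucoe j hj.le, hucoe (j+1) hj, Real.dist_eq]
        rw [show (j:ℝ)/n - ((j:ℕ)+1:ℕ)/n = -(1/n) by push_cast; field_simp; ring]
        rw [abs_neg, abs_of_pos (by positivity)]
      rw [this]
      exact hinv
    have h1 : ρ j q - 1 = (v j q - v (j+1) q) / v (j+1) q := by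
      rw [eq_div_iff (hvne _ q), sub_mul, div_mul_cancel₀ _ (hvne _ q)]
      simp
    rw [h1, map_div₀, hvabs, div_one, Complex.abs_apply, ← Complex.dist_eq]
    exact hd
  -- the lift
  set Hf : (↥S1 × ↥S1) → ℝ :=
    fun q => (∑ j ∈ Finset.range n, (ρ j q).arg) / (2*Real.pi) with hHf
  have hρcont : ∀ j, Continuous (fun q => ρ j q) := by
    intro j
    apply Continuous.div
    · exact hkcont.comp (Continuous.prodMk_right (u j))
    · exact hkcont.comp (Continuous.prodMk_right (u (j+1)))
    · exact fun q => hvne (j+1) q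
  refine ⟨Hf, ?_, ?_⟩
  · apply Continuous.div_const
    apply continuous_finset_sum
    intro j hj
    rw [continuous_iff_continuousAt]
    intro q
    apply (Complex.continuousAt_arg ?_).comp (hρcont j).continuousAt
    rw [Complex.mem_slitPlane_iff]
    exact Or.inl (hρre j q (Finset.mem_range.1 hj))
  · intro q
    have hval : ee (Hf q) = v 0 q / v n q := by
      rw [ee, hHf]
      have harg : ((( ∑ j ∈ Finset.range n, (ρ j q).arg) / (2*Real.pi) : ℝ) : ℂ) * (2 * Real.pi * I)
          = ∑ j ∈ Finset.range n, ((ρ j q).arg : ℂ) * I := by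
        push_cast
        rw [← Finset.sum_mul]
        have hπ : ((Real.pi : ℂ)) ≠ 0 := by exact_mod_cast Real.pi_ne_zero
        field_simp
      rw [harg, Complex.exp_sum]
      have hexp : ∀ j ∈ Finset.range n, Complex.exp (((ρ j q).arg : ℂ) * I) = ρ j q := by
        intro j _
        have := Complex.abs_mul_exp_arg_mul_I (ρ j q)
        rwa [hρabs, ofReal_one, one_mul] at this
      rw [Finset.prod_congr rfl hexp]
      exact telescope (fun j => v j q) (fun j => hvne j q) n
    have hv0 : v 0 q = ((ψ q).2 : ℂ) / (q.2 : ℂ) := by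
      have hu0 : u 0 = 0 := by
        apply Subtype.ext
        rw [hucoe 0 (Nat.zero_le n)]
        simp
      show k (u 0, q) = _
      rw [hu0, hk]
      simp only
      congr 1
      exact congrArg (fun p => ((p.2 : ℂ))) (K.apply_zero q)
    have hvn : v n q = 1 := by
      have hun : u n = 1 := by
        apply Subtype.ext
        rw [hucoe n le_rfl, div_self (ne_of_gt hn0)]
        simp
      show k (u n, q) = _
      rw [hun, hk]
      simp only
      have : K (1, q) = q := by
        rw [K.apply_one]; rfl
      rw [this]
      exact div_self (S1_ne q.2)
    have hcoe : ((φ (torusIncl q)).2 : ℂ) = ((ψ q).2 : ℂ) := by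
      rw [← hψ q]; rfl
    rw [hcoe, hval, hv0, hvn]
    field_simp
    rw [mul_div_assoc, div_self (S1_ne q.2), mul_one]

section Fibered

variable (φ : (↥S1 × ↥Disk) ≃ₜ (↥S1 × ↥Disk)) (hp : ∀ p, (φ p).1 = p.1)
  (H : (↥S1 × ↥S1) → ℝ) (hHc : Continuous H)
  (hH : ∀ q, ((φ (torusIncl q)).2 : ℂ) = (q.2:ℂ) * ee (H q))

include hp in
lemma fD_inj {θ : ↥S1} {z1 z2 : ↥Disk} (h : (φ (θ, z1)).2 = (φ (θ, z2)).2) : z1 = z2 := by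
  have h1 : φ (θ, z1) = φ (θ, z2) := by
    refine Prod.ext ?_ h
    rw [hp (θ, z1), hp (θ, z2)]
  have := φ.injective h1
  exact (Prod.ext_iff.1 this).2

include hp in
lemma fD_surj (θ : ↥S1) (y : ↥Disk) : ∃ z : ↥Disk, (φ (θ, z)).2 = y := by
  obtain ⟨p, hpp⟩ := φ.surjective (θ, y)
  have h1 : p.1 = θ := by rw [← hp p, hpp]
  refine ⟨p.2, ?_⟩
  have h2 : (θ, p.2) = p := by rw [← h1]
  rw [h2, hpp]

include hH in
lemma fD_boundary (θ : ↥S1) (w : ℂ) (hw : w ∈ S1) (hd : w ∈ Disk) :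
    ((φ (θ, ⟨w, hd⟩)).2 : ℂ) = w * ee (H (θ, ⟨w, hw⟩)) := by
  have : (θ, (⟨w, hd⟩ : ↥Disk)) = torusIncl (θ, (⟨w, hw⟩ : ↥S1)) := by
    refine Prod.ext rfl (Subtype.ext rfl)
  rw [this, hH]

include hp hH in
lemma gS_inj {θ : ↥S1} {w1 w2 : ↥S1}
    (h : (w1:ℂ) * ee (H (θ, w1)) = (w2:ℂ) * ee (H (θ, w2))) : w1 = w2 := by
  rw [← hH (θ, w1), ← hH (θ, w2)] at h
  have h2 : (φ (torusIncl (θ, w1))).2 = (φ (torusIncl (θ, w2))).2 := Subtype.ext h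
  have h3 := fD_inj φ hp h2
  have h4 := congrArg Subtype.val h3
  exact Subtype.ext h4

include hp hHc hH in
lemma beta_bij (θ : ↥S1) {c : ℝ} (hc0 : 0 ≤ c) (hc1 : c ≤ 1) :
    (∀ w1 w2 : ↥S1, (w1:ℂ) * ee (c * H (θ,w1)) = (w2:ℂ) * ee (c * H (θ,w2)) → w1 = w2) ∧
    (∀ w' : ↥S1, ∃ w : ↥S1, (w:ℂ) * ee (c * H (θ,w)) = (w':ℂ)) := by
  set Q : ℝ → ℝ := fun x => H (θ, eC x) with hQ
  have hQcont : Continuous Q := hHc.comp (Continuous.prodMk_right θ |>.comp eC_cont)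
  have hQper : ∀ (x : ℝ) (k : ℤ), Q (x + k) = Q x := by
    intro x k; rw [hQ]; simp only [eC_add_int]
  set B : ℝ → ℝ := fun x => x + Q x with hB
  have hBee : ∀ x, ee (B x) = (eC x : ℂ) * ee (H (θ, eC x)) := by
    intro x; rw [hB]; simp only; rw [ee_add]; rfl
  have hBinj : Function.Injective B := by
    intro x y hxy
    have h1 : ee (B x) = ee (B y) := by rw [hxy]
    rw [hBee, hBee] at h1
    have h2 : eC x = eC y := gS_inj φ hp H hH h1
    have h3 : ee x = ee y := congrArg Subtype.val h2
    obtain ⟨k, hk⟩ := ee_eq_ee h3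
    have h4 : B x = B y + k := by
      rw [hB]; simp only; rw [hk, hQper y k]; ring
    rw [hxy] at h4
    have : (k:ℝ) = 0 := by linarith
    have : k = 0 := by exact_mod_cast this
    rw [hk, this]; simp
  have hBcont : Continuous B := continuous_id.add hQcont
  have hBmono : StrictMono B := by
    rcases hBcont.strictMono_of_inj hBinj with h | h
    · exact h
    · exfalso
      have h1 : B 1 = B 0 + 1 := by
        have hq : Q 1 = Q 0 := by
          have := hQper 0 1; push_cast at this; simpa using this
        show 1 + Q 1 = (0 + Q 0) + 1
        rw [hq]; ring
      have := h (show (0:ℝ) < 1 by norm_num)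
      linarith
  set L : ℝ → ℝ := fun x => x + c * Q x with hL
  have hLmono : StrictMono L := by
    intro a b hab
    have hBab := hBmono hab
    rw [hB] at hBab; simp only at hBab
    show a + c * Q a < b + c * Q b
    rcases eq_or_lt_of_le hc0 with hc | hc
    · rw [← hc]; simpa using hab
    · nlinarith [mul_pos hc (sub_pos.2 hBab), mul_nonneg (sub_nonneg.2 hc1) (sub_pos.2 hab).le]
  have hLinj : Function.Injective L := hLmono.injective
  have hLper : ∀ (x : ℝ) (k : ℤ), L (x + k) = L x + k := by
    intro x k; rw [hL]; simp only; rw [hQper x k]; ring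
  have hLcont : Continuous L := continuous_id.add (continuous_const.mul hQcont)
  have hLsurj : Function.Surjective L := by
    apply Continuous.surjective hLcont
    · apply Filter.tendsto_atTop_atTop_of_monotone hLmono.monotone
      intro b
      refine ⟨(0:ℝ) + (⌈b - L 0⌉ : ℤ), ?_⟩
      rw [hLper 0 ⌈b - L 0⌉]
      have := Int.le_ceil (b - L 0)
      linarith
    · apply Filter.tendsto_atBot_atBot_of_monotone hLmono.monotone
      intro b
      refine ⟨(0:ℝ) + (-⌈L 0 - b⌉ : ℤ), ?_⟩
      rw [hLper 0 (-⌈L 0 - b⌉)]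
      have := Int.le_ceil (L 0 - b)
      push_cast
      linarith
  have hLee : ∀ x, ee (L x) = (eC x : ℂ) * ee (c * H (θ, eC x)) := by
    intro x; rw [hL]; simp only; rw [ee_add]; rfl
  constructor
  · intro w1 w2 hw
    obtain ⟨x1, hx1⟩ := eC_surj w1
    obtain ⟨x2, hx2⟩ := eC_surj w2
    rw [← hx1, ← hx2, ← hLee, ← hLee] at hw
    obtain ⟨k, hk⟩ := ee_eq_ee hw
    have : L x1 = L (x2 + k) := by rw [hLper]; exact hk
    have hx : x1 = x2 + k := hLinj this
    rw [← hx1, ← hx2, hx, eC_add_int]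
  · intro w'
    obtain ⟨y, hy⟩ := eC_surj w'
    obtain ⟨x, hx⟩ := hLsurj y
    refine ⟨eC x, ?_⟩
    rw [← hLee, hx, ← hy]
    rfl


lemma ee_zero : ee 0 = 1 := by simp [ee]

-- time-rescaling factor
noncomputable def cfac (r : ℝ) : ℝ := min 1 (max (2 - r) 0)
lemma cfac_cont : Continuous cfac := by unfold cfac; fun_prop
lemma cfac_early {r : ℝ} (h : r ≤ 1) : cfac r = 1 := by
  unfold cfac
  rw [max_eq_left (by linarith), min_eq_left (by linarith)]
lemma cfac_late {r : ℝ} (h : 2 ≤ r) : cfac r = 0 := by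
  unfold cfac
  rw [max_eq_right (by linarith), min_eq_right (by linarith)]
lemma cfac_nonneg (r : ℝ) : 0 ≤ cfac r := le_min (by norm_num) (le_max_right _ _)
lemma cfac_le_one (r : ℝ) : cfac r ≤ 1 := min_le_left _ _

lemma memD1 {r : ℝ} {z : ℂ} (h : Complex.abs z ≤ 1 - r) : z / ((1-r : ℝ) : ℂ) ∈ Disk := by
  have h0 : (0:ℝ) ≤ 1 - r := le_trans (Complex.abs.nonneg z) h
  rcases eq_or_lt_of_le h0 with h1 | h1
  · rw [← h1]
    simp [mem_Disk_iff]
  · rw [mem_Disk_iff, map_div₀, Complex.abs_ofReal, abs_of_pos h1, div_le_one h1]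
    exact h

lemma memS1_div {z : ℂ} (h : z ≠ 0) : z / ((Complex.abs z : ℝ) : ℂ) ∈ S1 := by
  rw [mem_S1_iff, map_div₀, Complex.abs_ofReal, abs_of_pos (Complex.abs.pos h),
    div_self (ne_of_gt (Complex.abs.pos h))]


noncomputable def Psi (r : ℝ) (θ : ↥S1) (z : ℂ) : ℂ :=
  if h1 : Complex.abs z ≤ 1 - r then
    ((1 - r : ℝ) : ℂ) * ((φ (θ, ⟨z / ((1-r : ℝ) : ℂ), memD1 h1⟩)).2 : ℂ)
  else if h0 : z = 0 then 0
  else z * ee (cfac r * H (θ, ⟨z / ((Complex.abs z : ℝ) : ℂ), memS1_div h0⟩))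

lemma Psi_mem {r : ℝ} (hr : 0 ≤ r) (θ : ↥S1) {z : ℂ} (hz : z ∈ Disk) :
    Psi φ H r θ z ∈ Disk := by
  unfold Psi
  split_ifs with h1 h0
  · have h0 : (0:ℝ) ≤ 1 - r := le_trans (Complex.abs.nonneg z) h1
    rw [mem_Disk_iff, map_mul, Complex.abs_ofReal, _root_.abs_of_nonneg h0]
    calc (1-r) * Complex.abs _ ≤ (1-r) * 1 :=
          mul_le_mul_of_nonneg_left (Disk_abs _) h0
      _ ≤ 1 := by linarith
  · simp [mem_Disk_iff]
  · rw [mem_Disk_iff, map_mul, ee_abs, mul_one]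
    exact (mem_Disk_iff z).1 hz

lemma Psi_zero (θ : ↥S1) (z : ↥Disk) : Psi φ H 0 θ ↑z = ((φ (θ, z)).2 : ℂ) := by
  unfold Psi
  rw [dif_pos (by simpa using Disk_abs z)]
  have : (⟨(z:ℂ) / ((1-(0:ℝ) : ℝ) : ℂ), memD1 (by simpa using Disk_abs z)⟩ : ↥Disk) = z := by
    apply Subtype.ext
    simp
  rw [this]
  simp

lemma Psi_late {r : ℝ} (hr : 2 ≤ r) (θ : ↥S1) (z : ℂ) : Psi φ H r θ z = z := by
  unfold Psi
  rw [dif_neg (by nlinarith [Complex.abs.nonneg z])]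
  split_ifs with h0
  · rw [h0]
  · rw [cfac_late hr, zero_mul, ee_zero, mul_one]


include hp hHc hH in
lemma Psi_injOn {r : ℝ} (hr : 0 ≤ r) (θ : ↥S1) {z1 z2 : ℂ}
    (hz1 : z1 ∈ Disk) (hz2 : z2 ∈ Disk)
    (heq : Psi φ H r θ z1 = Psi φ H r θ z2) : z1 = z2 := by
  have hbeta := beta_bij φ hp H hHc hH θ (cfac_nonneg r) (cfac_le_one r)
  unfold Psi at heq
  by_cases h1 : Complex.abs z1 ≤ 1 - r <;> by_cases h2 : Complex.abs z2 ≤ 1 - r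
  · -- both in branch 1
    rw [dif_pos h1, dif_pos h2] at heq
    have h0 : (0:ℝ) ≤ 1 - r := le_trans (Complex.abs.nonneg z1) h1
    rcases eq_or_lt_of_le h0 with he | he
    · have e1 : z1 = 0 := by
        rw [← Complex.abs.eq_zero]; linarith [Complex.abs.nonneg z1]
      have e2 : z2 = 0 := by
        rw [← Complex.abs.eq_zero]; linarith [Complex.abs.nonneg z2]
      rw [e1, e2]
    · have hne : ((1 - r : ℝ) : ℂ) ≠ 0 := by
        simp only [ne_eq, Complex.ofReal_eq_zero]; linarith
      have h3 := mul_left_cancel₀ hne heq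
      have h4 := fD_inj φ hp (Subtype.ext h3)
      have h5 : z1 / ((1-r:ℝ):ℂ) = z2 / ((1-r:ℝ):ℂ) := congrArg Subtype.val h4
      have h6 := congrArg (fun x => x * ((1-r:ℝ):ℂ)) h5
      simp only [div_mul_cancel₀ _ hne] at h6
      exact h6
  · exfalso
    rw [dif_pos h1, dif_neg h2] at heq
    split_ifs at heq with h20
    · rw [h20] at h2
      simp only [map_zero] at h2
      exact h2 (le_trans (Complex.abs.nonneg z1) h1)
    · have h0 : (0:ℝ) ≤ 1 - r := le_trans (Complex.abs.nonneg z1) h1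
      have hL : Complex.abs (((1 - r : ℝ) : ℂ) *
          ((φ (θ, ⟨z1 / ((1-r:ℝ):ℂ), memD1 h1⟩)).2 : ℂ)) ≤ 1 - r := by
        rw [map_mul, Complex.abs_ofReal, _root_.abs_of_nonneg h0]
        calc (1-r) * Complex.abs _ ≤ (1-r) * 1 :=
              mul_le_mul_of_nonneg_left (Disk_abs _) h0
          _ = 1 - r := mul_one _
      rw [heq, map_mul, ee_abs, mul_one] at hL
      exact h2 hL
  · exfalso
    rw [dif_neg h1, dif_pos h2] at heq
    split_ifs at heq with h10
    · rw [h10] at h1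
      simp only [map_zero] at h1
      exact h1 (le_trans (Complex.abs.nonneg z2) h2)
    · have h0 : (0:ℝ) ≤ 1 - r := le_trans (Complex.abs.nonneg z2) h2
      have hL : Complex.abs (((1 - r : ℝ) : ℂ) *
          ((φ (θ, ⟨z2 / ((1-r:ℝ):ℂ), memD1 h2⟩)).2 : ℂ)) ≤ 1 - r := by
        rw [map_mul, Complex.abs_ofReal, _root_.abs_of_nonneg h0]
        calc (1-r) * Complex.abs _ ≤ (1-r) * 1 :=
              mul_le_mul_of_nonneg_left (Disk_abs _) h0
          _ = 1 - r := mul_one _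
      rw [← heq, map_mul, ee_abs, mul_one] at hL
      exact h1 hL
  · rw [dif_neg h1, dif_neg h2] at heq
    split_ifs at heq with h10 h20 h20
    · rw [h10, h20]
    · exact absurd heq.symm (mul_ne_zero h20 (ee_ne _))
    · exact absurd heq (mul_ne_zero h10 (ee_ne _))
    · have habs : Complex.abs z1 = Complex.abs z2 := by
        have := congrArg Complex.abs heq
        rwa [map_mul, map_mul, ee_abs, ee_abs, mul_one, mul_one] at this
      have hane : ((Complex.abs z1 : ℝ) : ℂ) ≠ 0 := by
        simp only [ne_eq, Complex.ofReal_eq_zero]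
        exact Complex.abs.ne_zero h10
      have h3 : (z1 / ((Complex.abs z1:ℝ):ℂ)) *
            ee (cfac r * H (θ, ⟨z1 / ((Complex.abs z1:ℝ):ℂ), memS1_div h10⟩)) =
          (z2 / ((Complex.abs z2:ℝ):ℂ)) *
            ee (cfac r * H (θ, ⟨z2 / ((Complex.abs z2:ℝ):ℂ), memS1_div h20⟩)) := by
        rw [div_mul_eq_mul_div, div_mul_eq_mul_div, heq, habs]
      have h5 := congrArg Subtype.val (hbeta.1 ⟨z1 / ((Complex.abs z1:ℝ):ℂ), memS1_div h10⟩ ⟨z2 / ((Complex.abs z2:ℝ):ℂ), memS1_div h20⟩ h3)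
      simp only at h5
      rw [← habs] at h5
      have h6 := congrArg (fun x => x * ((Complex.abs z1:ℝ):ℂ)) h5
      simp only [div_mul_cancel₀ _ hane] at h6
      exact h6

include hp hHc hH in
lemma Psi_surjOn {r : ℝ} (hr : 0 ≤ r) (θ : ↥S1) {y : ℂ} (hy : y ∈ Disk) :
    ∃ z ∈ Disk, Psi φ H r θ z = y := by
  have hbeta := beta_bij φ hp H hHc hH θ (cfac_nonneg r) (cfac_le_one r)
  by_cases hyb : Complex.abs y ≤ 1 - r
  · have h0 : (0:ℝ) ≤ 1 - r := le_trans (Complex.abs.nonneg y) hyb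
    rcases eq_or_lt_of_le h0 with he | he
    · have hy0 : y = 0 := by
        rw [← Complex.abs.eq_zero]; linarith [Complex.abs.nonneg y]
      refine ⟨0, by simp [mem_Disk_iff], ?_⟩
      unfold Psi
      rw [dif_pos (by simpa using h0)]
      have hcoef : ((1-r:ℝ):ℂ) = 0 := by
        rw [Complex.ofReal_eq_zero]; linarith
      rw [hy0]
      exact mul_eq_zero_of_left hcoef _
    · have hmem : y / ((1-r:ℝ):ℂ) ∈ Disk := memD1 hyb
      obtain ⟨u, hu⟩ := fD_surj φ hp θ ⟨y / ((1-r:ℝ):ℂ), hmem⟩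
      have hne : ((1 - r : ℝ) : ℂ) ≠ 0 := by
        simp only [ne_eq, Complex.ofReal_eq_zero]; linarith
      have hzabs : Complex.abs (((1-r:ℝ):ℂ) * (u : ℂ)) ≤ 1 - r := by
        rw [map_mul, Complex.abs_ofReal, _root_.abs_of_nonneg h0]
        calc (1-r) * Complex.abs (u:ℂ) ≤ (1-r) * 1 :=
              mul_le_mul_of_nonneg_left (Disk_abs u) h0
          _ = 1 - r := mul_one _
      refine ⟨((1-r:ℝ):ℂ) * (u : ℂ), (mem_Disk_iff _).2 (by linarith), ?_⟩
      unfold Psi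
      rw [dif_pos hzabs]
      have hzu : (⟨((1-r:ℝ):ℂ) * (u : ℂ) / ((1-r:ℝ):ℂ), memD1 hzabs⟩ : ↥Disk) = u := by
        apply Subtype.ext
        show ((1-r:ℝ):ℂ) * (u : ℂ) / ((1-r:ℝ):ℂ) = (u : ℂ)
        exact mul_div_cancel_left₀ _ hne
      rw [hzu, hu]
      show ((1-r:ℝ):ℂ) * (y / ((1-r:ℝ):ℂ)) = y
      rw [mul_comm]
      exact div_mul_cancel₀ y hne
  · by_cases hy0 : y = 0
    · refine ⟨0, by simp [mem_Disk_iff], ?_⟩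
      unfold Psi
      rw [dif_neg (by rw [hy0] at hyb; simpa using hyb)]
      rw [dif_pos rfl, hy0]
    · have ha0 : 0 < Complex.abs y := Complex.abs.pos hy0
      obtain ⟨w, hw⟩ := hbeta.2 ⟨y / ((Complex.abs y:ℝ):ℂ), memS1_div hy0⟩
      have hane : ((Complex.abs y:ℝ):ℂ) ≠ 0 := by
        simp only [ne_eq, Complex.ofReal_eq_zero]; exact ne_of_gt ha0
      have hzabs : Complex.abs (((Complex.abs y:ℝ):ℂ) * (w : ℂ)) = Complex.abs y := by
        rw [map_mul, Complex.abs_ofReal, _root_.abs_of_nonneg ha0.le, S1_abs, mul_one]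
      have hz0 : ((Complex.abs y:ℝ):ℂ) * (w : ℂ) ≠ 0 := mul_ne_zero hane (S1_ne w)
      refine ⟨((Complex.abs y:ℝ):ℂ) * (w : ℂ),
        (mem_Disk_iff _).2 (by rw [hzabs]; exact (mem_Disk_iff y).1 hy), ?_⟩
      unfold Psi
      rw [dif_neg (by rw [hzabs]; exact hyb), dif_neg hz0]
      have hzw : (⟨((Complex.abs y:ℝ):ℂ) * (w : ℂ) /
          ((Complex.abs (((Complex.abs y:ℝ):ℂ) * (w : ℂ)) : ℝ) : ℂ), memS1_div hz0⟩ : ↥S1) = w := by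
        apply Subtype.ext
        show ((Complex.abs y:ℝ):ℂ) * (w : ℂ) /
          ((Complex.abs (((Complex.abs y:ℝ):ℂ) * (w : ℂ)) : ℝ) : ℂ) = (w : ℂ)
        rw [hzabs]
        exact mul_div_cancel_left₀ _ hane
      rw [hzw]
      calc ((Complex.abs y:ℝ):ℂ) * (w:ℂ) * ee (cfac r * H (θ, w))
          = ((Complex.abs y:ℝ):ℂ) * ((w:ℂ) * ee (cfac r * H (θ, w))) := by ring
        _ = ((Complex.abs y:ℝ):ℂ) * (y / ((Complex.abs y:ℝ):ℂ)) := by rw [hw]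
        _ = y := by rw [mul_comm]; exact div_mul_cancel₀ y hane

-- total extensions used for continuity arguments
noncomputable def fExt (θ : ↥S1) (z : ℂ) : ℂ :=
  haveI := Classical.dec (z ∈ Disk)
  if h : z ∈ Disk then ((φ (θ, ⟨z, h⟩)).2 : ℂ) else 0

noncomputable def HExt (θ : ↥S1) (w : ℂ) : ℝ :=
  haveI := Classical.dec (w ∈ S1)
  if h : w ∈ S1 then H (θ, ⟨w, h⟩) else 0

lemma fExt_abs_le (θ : ↥S1) (z : ℂ) : Complex.abs (fExt φ θ z) ≤ 1 := by
  unfold fExt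
  split_ifs with h
  · exact Disk_abs _
  · simp

lemma fExt_contOn : ContinuousOn (fun q : ↥S1 × ℂ => fExt φ q.1 q.2) {q | q.2 ∈ Disk} := by
  rw [continuousOn_iff_continuous_restrict]
  have : Set.domRestrict {q : ↥S1 × ℂ | q.2 ∈ Disk} (fun q => fExt φ q.1 q.2)
      = fun x => ((φ (x.val.1, ⟨x.val.2, x.property⟩)).2 : ℂ) := by
    funext x
    simp only [Set.domRestrict_apply]
    unfold fExt
    exact dif_pos x.property
  rw [this]
  apply continuous_subtype_val.comp
  apply continuous_snd.comp
  apply φ.continuous.comp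
  exact (continuous_fst.comp continuous_subtype_val).prodMk
    (Continuous.subtype_mk (continuous_snd.comp continuous_subtype_val) _)

include hHc in
lemma HExt_contOn : ContinuousOn (fun q : ↥S1 × ℂ => HExt H q.1 q.2) {q | q.2 ∈ S1} := by
  rw [continuousOn_iff_continuous_restrict]
  have : Set.domRestrict {q : ↥S1 × ℂ | q.2 ∈ S1} (fun q => HExt H q.1 q.2)
      = fun x => H (x.val.1, ⟨x.val.2, x.property⟩) := by
    funext x
    simp only [Set.domRestrict_apply]
    unfold HExt
    exact dif_pos x.property
  rw [this]
  apply hHc.comp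
  exact (continuous_fst.comp continuous_subtype_val).prodMk
    (Continuous.subtype_mk (continuous_snd.comp continuous_subtype_val) _)

-- the two closed pieces
lemma Psi_eq_A {r : ℝ} {θ : ↥S1} {z : ℂ} (h : Complex.abs z ≤ 1 - r) :
    Psi φ H r θ z = ((1-r:ℝ):ℂ) * fExt φ θ (z / ((1-r:ℝ):ℂ)) := by
  unfold Psi fExt
  rw [dif_pos h, dif_pos (memD1 h)]

include hH in
lemma Psi_eq_B {r : ℝ} {θ : ↥S1} {z : ℂ} (h : 1 - r ≤ Complex.abs z) :
    Psi φ H r θ z = if z = 0 then 0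
      else z * ee (cfac r * HExt H θ (z / ((Complex.abs z : ℝ):ℂ))) := by
  by_cases h0 : z = 0
  · rw [if_pos h0, h0]
    rw [h0, map_zero] at h
    unfold Psi
    split_ifs with h1 h2
    · have hc : ((1-r:ℝ):ℂ) = 0 := by
        rw [Complex.ofReal_eq_zero]
        simp only [map_zero] at h1
        linarith
      exact mul_eq_zero_of_left hc _
    · rfl
    · exact absurd rfl h2
  · rw [if_neg h0]
    unfold Psi HExt
    rcases lt_or_eq_of_le h with h1 | h1
    · rw [dif_neg (not_le.2 h1), dif_neg h0, dif_pos (memS1_div h0)]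
    · -- boundary case |z| = 1 - r
      have habs0 : 0 < Complex.abs z := Complex.abs.pos h0
      have hr1 : r ≤ 1 := by
        have := Complex.abs.nonneg z; linarith [h1]
      have hne : ((1-r:ℝ):ℂ) ≠ 0 := by
        rw [ne_eq, Complex.ofReal_eq_zero, h1]
        exact ne_of_gt habs0
      rw [dif_pos h1.ge, dif_pos (memS1_div h0)]
      have hwmem : z / ((1-r:ℝ):ℂ) ∈ S1 := by
        rw [mem_S1_iff, map_div₀, Complex.abs_ofReal,
          _root_.abs_of_nonneg (by rw [h1]; positivity), h1, div_self (ne_of_gt habs0)]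
      rw [fD_boundary φ H hH θ _ hwmem (memD1 h1.ge)]
      have hsame : (⟨z / ((1-r:ℝ):ℂ), hwmem⟩ : ↥S1)
          = ⟨z / ((Complex.abs z : ℝ):ℂ), memS1_div h0⟩ := by
        apply Subtype.ext
        show z / ((1-r:ℝ):ℂ) = z / ((Complex.abs z : ℝ):ℂ)
        rw [h1]
      rw [hsame, cfac_early hr1, one_mul, ← mul_assoc]
      congr 1
      rw [mul_comm]
      exact div_mul_cancel₀ z hne

include hHc hH in
lemma Psi_cont : Continuous (fun p : ℝ × ↥S1 × ↥Disk => Psi φ H p.1 p.2.1 (p.2.2 : ℂ)) := by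
  set A : Set (ℝ × ↥S1 × ↥Disk) := {p | Complex.abs (p.2.2 : ℂ) ≤ 1 - p.1} with hA
  set B : Set (ℝ × ↥S1 × ↥Disk) := {p | 1 - p.1 ≤ Complex.abs (p.2.2 : ℂ)} with hB
  have habscont : Continuous (fun p : ℝ × ↥S1 × ↥Disk => Complex.abs (p.2.2 : ℂ)) :=
    Complex.continuous_abs.comp (continuous_subtype_val.comp (continuous_snd.comp continuous_snd))
  have hsub : Continuous (fun p : ℝ × ↥S1 × ↥Disk => 1 - p.1) :=
    continuous_const.sub continuous_fst
  have hAclosed : IsClosed A := isClosed_le habscont hsub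
  have hBclosed : IsClosed B := isClosed_le hsub habscont
  -- continuity of the A-side formula on A
  have hcontA : ContinuousOn
      (fun p : ℝ × ↥S1 × ↥Disk => ((1-p.1:ℝ):ℂ) * fExt φ p.2.1 ((p.2.2:ℂ) / ((1-p.1:ℝ):ℂ))) A := by
    intro p hp
    have hge : (0:ℝ) ≤ 1 - p.1 := le_trans (Complex.abs.nonneg _) hp
    rcases lt_or_eq_of_le hge with hlt | heq
    · apply ContinuousWithinAt.mul
      · exact ((Complex.continuous_ofReal.comp hsub).continuousAt).continuousWithinAt
      · show ContinuousWithinAt ((fun q : ↥S1 × ℂ => fExt φ q.1 q.2) ∘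
          (fun x : ℝ × ↥S1 × ↥Disk => (x.2.1, (x.2.2:ℂ) / ((1-x.1:ℝ):ℂ)))) A p
        apply ContinuousWithinAt.comp (t := {q : ↥S1 × ℂ | q.2 ∈ Disk})
        · exact fExt_contOn φ _ (by exact memD1 hp)
        · apply ContinuousWithinAt.prodMk
          · exact ((continuous_fst.comp continuous_snd).continuousAt).continuousWithinAt
          · apply ContinuousWithinAt.div
            · exact ((continuous_subtype_val.comp
                (continuous_snd.comp continuous_snd)).continuousAt).continuousWithinAt
            · exact ((Complex.continuous_ofReal.comp hsub).continuousAt).continuousWithinAt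
            · rw [ne_eq, Complex.ofReal_eq_zero]
              exact ne_of_gt hlt
        · intro q hq
          exact memD1 hq
    · have hval : (fun p : ℝ × ↥S1 × ↥Disk =>
          ((1-p.1:ℝ):ℂ) * fExt φ p.2.1 ((p.2.2:ℂ) / ((1-p.1:ℝ):ℂ))) p = 0 := by
        apply mul_eq_zero_of_left
        rw [Complex.ofReal_eq_zero, ← heq]
      unfold ContinuousWithinAt
      rw [hval]
      apply squeeze_zero_norm (a := fun q : ℝ × ↥S1 × ↥Disk => |1 - q.1|)
      · intro q
        rw [Complex.norm_eq_abs, map_mul, Complex.abs_ofReal]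
        calc |1 - q.1| * Complex.abs (fExt φ q.2.1 _) ≤ |1 - q.1| * 1 :=
              mul_le_mul_of_nonneg_left (fExt_abs_le φ _ _) (abs_nonneg _)
          _ = |1 - q.1| := mul_one _
      · have h2 : Filter.Tendsto (fun q : ℝ × ↥S1 × ↥Disk => |1 - q.1|)
            (nhds p) (nhds |1 - p.1|) := (hsub.abs).continuousAt
        rw [← heq, abs_zero] at h2
        exact h2.mono_left nhdsWithin_le_nhds
  -- continuity of the B-side formula on B
  have hcontB : ContinuousOn
      (fun p : ℝ × ↥S1 × ↥Disk => if (p.2.2:ℂ) = 0 then 0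
        else (p.2.2:ℂ) * ee (cfac p.1 * HExt H p.2.1 ((p.2.2:ℂ) / ((Complex.abs (p.2.2:ℂ) : ℝ):ℂ)))) B := by
    intro p hp
    by_cases h0 : (p.2.2:ℂ) = 0
    · have hval : (fun p : ℝ × ↥S1 × ↥Disk => if (p.2.2:ℂ) = 0 then (0:ℂ)
          else (p.2.2:ℂ) * ee (cfac p.1 * HExt H p.2.1 ((p.2.2:ℂ) / ((Complex.abs (p.2.2:ℂ) : ℝ):ℂ)))) p = 0 :=
        if_pos h0
      unfold ContinuousWithinAt
      rw [hval]
      apply squeeze_zero_norm (a := fun q : ℝ × ↥S1 × ↥Disk => Complex.abs (q.2.2:ℂ))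
      · intro q
        split_ifs with hq0
        · simp
        · rw [Complex.norm_eq_abs, map_mul, ee_abs, mul_one]
      · have h2 : Filter.Tendsto (fun q : ℝ × ↥S1 × ↥Disk => Complex.abs (q.2.2:ℂ))
            (nhds p) (nhds (Complex.abs (p.2.2:ℂ))) := habscont.continuousAt
        rw [h0, map_zero] at h2
        exact h2.mono_left nhdsWithin_le_nhds
    · have hopen : ∀ᶠ q in nhdsWithin p B, (q.2.2:ℂ) ≠ 0 := by
        apply Filter.Eventually.filter_mono nhdsWithin_le_nhds
        have ho : IsOpen {q : ℝ × ↥S1 × ↥Disk | (q.2.2:ℂ) ≠ 0} :=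
          isOpen_compl_iff.2 (isClosed_eq (continuous_subtype_val.comp
            (continuous_snd.comp continuous_snd)) continuous_const)
        exact ho.mem_nhds h0
      have hcongr : ∀ᶠ q in nhdsWithin p B,
          (if (q.2.2:ℂ) = 0 then (0:ℂ)
            else (q.2.2:ℂ) * ee (cfac q.1 * HExt H q.2.1 ((q.2.2:ℂ) / ((Complex.abs (q.2.2:ℂ) : ℝ):ℂ))))
          = (q.2.2:ℂ) * ee (cfac q.1 * HExt H q.2.1 ((q.2.2:ℂ) / ((Complex.abs (q.2.2:ℂ) : ℝ):ℂ))) := by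
        filter_upwards [hopen] with q hq
        rw [if_neg hq]
      apply ContinuousWithinAt.congr_of_eventuallyEq ?_ hcongr (if_neg h0)
      apply ContinuousWithinAt.mul
      · exact ((continuous_subtype_val.comp
          (continuous_snd.comp continuous_snd)).continuousAt).continuousWithinAt
      · show ContinuousWithinAt (ee ∘ (fun q : ℝ × ↥S1 × ↥Disk =>
            cfac q.1 * HExt H q.2.1 ((q.2.2:ℂ) / ((Complex.abs (q.2.2:ℂ) : ℝ):ℂ)))) B p
        apply ContinuousWithinAt.comp (t := Set.univ)
        · exact ee_cont.continuousWithinAt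
        · apply ContinuousWithinAt.mul
          · exact ((cfac_cont.comp continuous_fst).continuousAt).continuousWithinAt
          · show ContinuousWithinAt ((fun q : ↥S1 × ℂ => HExt H q.1 q.2) ∘
              (fun x : ℝ × ↥S1 × ↥Disk => (x.2.1, (x.2.2:ℂ) / ((Complex.abs (x.2.2:ℂ) : ℝ):ℂ)))) B p
            have ho : IsOpen {q : ℝ × ↥S1 × ↥Disk | (q.2.2:ℂ) ≠ 0} :=
              isOpen_compl_iff.2 (isClosed_eq (continuous_subtype_val.comp
                (continuous_snd.comp continuous_snd)) continuous_const)
            refine ContinuousWithinAt.mono_of_mem_nhdsWithin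
              (t := B ∩ {q : ℝ × ↥S1 × ↥Disk | (q.2.2:ℂ) ≠ 0}) ?_
              (Filter.inter_mem self_mem_nhdsWithin
                (mem_nhdsWithin_of_mem_nhds (ho.mem_nhds h0)))
            apply ContinuousWithinAt.comp (t := {q : ↥S1 × ℂ | q.2 ∈ S1})
            · exact HExt_contOn H hHc _ (memS1_div h0)
            · apply ContinuousWithinAt.prodMk
              · exact ((continuous_fst.comp continuous_snd).continuousAt).continuousWithinAt
              · apply ContinuousWithinAt.div
                · exact ((continuous_subtype_val.comp
                    (continuous_snd.comp continuous_snd)).continuousAt).continuousWithinAt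
                · exact ((Complex.continuous_ofReal.comp habscont).continuousAt).continuousWithinAt
                · rw [ne_eq, Complex.ofReal_eq_zero]
                  exact Complex.abs.ne_zero h0
            · intro q hq
              exact memS1_div hq.2
        · intro q hq
          trivial
  -- glue
  have hcover : A ∪ B = Set.univ := by
    ext p
    simp only [Set.mem_union, Set.mem_univ, iff_true, hA, hB, Set.mem_setOf_eq]
    exact le_total _ _
  rw [continuous_iff_continuousAt]
  intro p
  have hA' : ContinuousWithinAt (fun p : ℝ × ↥S1 × ↥Disk => Psi φ H p.1 p.2.1 (p.2.2 : ℂ)) A p := by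
    by_cases hp : p ∈ A
    · exact (hcontA p hp).congr (fun q hq => Psi_eq_A φ H hq) (Psi_eq_A φ H hp)
    · exact continuousWithinAt_of_notMem_closure (by rwa [hAclosed.closure_eq])
  have hB' : ContinuousWithinAt (fun p : ℝ × ↥S1 × ↥Disk => Psi φ H p.1 p.2.1 (p.2.2 : ℂ)) B p := by
    by_cases hp : p ∈ B
    · exact (hcontB p hp).congr (fun q hq => Psi_eq_B φ H hH hq) (Psi_eq_B φ H hH hp)
    · exact continuousWithinAt_of_notMem_closure (by rwa [hBclosed.closure_eq])
  have := hA'.union hB'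
  rw [hcover] at this
  rwa [continuousWithinAt_univ] at this

end Fibered

noncomputable def PsiFull (φ₀ φ₁ : (↥S1 × ↥Disk) ≃ₜ (↥S1 × ↥Disk))
    (H₀ H₁ : (↥S1 × ↥S1) → ℝ) (x : unitInterval × ↥S1 × ↥Disk) : ℂ :=
  if (x.1:ℝ) ≤ 1/2 then Psi φ₀ H₀ (6*(x.1:ℝ)) x.2.1 (x.2.2:ℂ)
  else Psi φ₁ H₁ (6*(1-(x.1:ℝ))) x.2.1 (x.2.2:ℂ)

lemma PsiFull_mem (φ₀ φ₁ : (↥S1 × ↥Disk) ≃ₜ (↥S1 × ↥Disk))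
    (H₀ H₁ : (↥S1 × ↥S1) → ℝ) (x : unitInterval × ↥S1 × ↥Disk) :
    PsiFull φ₀ φ₁ H₀ H₁ x ∈ Disk := by
  unfold PsiFull
  split_ifs with h
  · exact Psi_mem φ₀ H₀ (by nlinarith [x.1.2.1]) x.2.1 x.2.2.2
  · exact Psi_mem φ₁ H₁ (by nlinarith [x.1.2.2]) x.2.1 x.2.2.2

lemma PsiFull_cont (φ₀ φ₁ : (↥S1 × ↥Disk) ≃ₜ (↥S1 × ↥Disk))
    (H₀ H₁ : (↥S1 × ↥S1) → ℝ) (hH₀c : Continuous H₀) (hH₁c : Continuous H₁)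
    (hH₀ : ∀ q, ((φ₀ (torusIncl q)).2 : ℂ) = (q.2:ℂ) * ee (H₀ q))
    (hH₁ : ∀ q, ((φ₁ (torusIncl q)).2 : ℂ) = (q.2:ℂ) * ee (H₁ q)) :
    Continuous (PsiFull φ₀ φ₁ H₀ H₁) := by
  unfold PsiFull
  have hc1 : Continuous (fun x : unitInterval × ↥S1 × ↥Disk =>
      Psi φ₀ H₀ (6*(x.1:ℝ)) x.2.1 (x.2.2:ℂ)) := by
    have := (Psi_cont φ₀ H₀ hH₀c hH₀).comp
      (f := fun x : unitInterval × ↥S1 × ↥Disk => ((6*(x.1:ℝ), x.2.1, x.2.2) : ℝ × ↥S1 × ↥Disk))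
      (by fun_prop)
    exact this
  have hc2 : Continuous (fun x : unitInterval × ↥S1 × ↥Disk =>
      Psi φ₁ H₁ (6*(1-(x.1:ℝ))) x.2.1 (x.2.2:ℂ)) := by
    have := (Psi_cont φ₁ H₁ hH₁c hH₁).comp
      (f := fun x : unitInterval × ↥S1 × ↥Disk => ((6*(1-(x.1:ℝ)), x.2.1, x.2.2) : ℝ × ↥S1 × ↥Disk))
      (by fun_prop)
    exact this
  apply Continuous.if_le hc1 hc2 (continuous_subtype_val.comp continuous_fst) continuous_const
  intro x hx
  have hx' : (x.1:ℝ) = 1/2 := hx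
  rw [Psi_late φ₀ H₀ (by rw [hx']; norm_num), Psi_late φ₁ H₁ (by rw [hx']; norm_num)]


/-- Lemme "extenauxtore": two fibered homeomorphisms of `S¹ × D` preserving the
boundary torus and homotopic to the identity there can be joined by a fibered
homeomorphism of `[0,1] × S¹ × D` which is the identity for `t ∈ [1/3, 2/3]`. -/
theorem join_fibered_homeos_of_torus
    (φ₀ φ₁ : (↥S1 × ↥Disk) ≃ₜ (↥S1 × ↥Disk))
    (hp₀ : ∀ p, (φ₀ p).1 = p.1) (hp₁ : ∀ p, (φ₁ p).1 = p.1)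
    (ht₀ : ∀ p : ↥S1 × ↥Disk, ((p.2 : ℂ) ∈ S1) ↔ (((φ₀ p).2 : ℂ) ∈ S1))
    (ht₁ : ∀ p : ↥S1 × ↥Disk, ((p.2 : ℂ) ∈ S1) ↔ (((φ₁ p).2 : ℂ) ∈ S1))
    (hh₀ : ∃ ψ : C(↥S1 × ↥S1, ↥S1 × ↥S1),
      (∀ q, torusIncl (ψ q) = φ₀ (torusIncl q)) ∧
      ψ.Homotopic (ContinuousMap.id _))
    (hh₁ : ∃ ψ : C(↥S1 × ↥S1, ↥S1 × ↥S1),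
      (∀ q, torusIncl (ψ q) = φ₁ (torusIncl q)) ∧
      ψ.Homotopic (ContinuousMap.id _)) :
    ∃ Φ : (unitInterval × ↥S1 × ↥Disk) ≃ₜ (unitInterval × ↥S1 × ↥Disk),
      (∀ x, (Φ x).1 = x.1) ∧
      (∀ x, (Φ x).2.1 = x.2.1) ∧
      (∀ p : ↥S1 × ↥Disk, (Φ (0, p)).2 = φ₀ p) ∧
      (∀ p : ↥S1 × ↥Disk, (Φ (1, p)).2 = φ₁ p) ∧
      (∀ (t : unitInterval) (p : ↥S1 × ↥Disk),
        (1/3 : ℝ) ≤ (t : ℝ) → (t : ℝ) ≤ (2/3 : ℝ) → (Φ (t, p)).2 = p) := by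
  obtain ⟨H₀, hH₀c, hH₀⟩ := exists_lift φ₀ hh₀
  obtain ⟨H₁, hH₁c, hH₁⟩ := exists_lift φ₁ hh₁
  -- the underlying map
  set F : unitInterval × ↥S1 × ↥Disk → unitInterval × ↥S1 × ↥Disk :=
    fun x => (x.1, x.2.1, ⟨PsiFull φ₀ φ₁ H₀ H₁ x, PsiFull_mem φ₀ φ₁ H₀ H₁ x⟩) with hF
  have hFcont : Continuous F := by
    apply continuous_fst.prodMk
    apply (continuous_fst.comp continuous_snd).prodMk
    exact Continuous.subtype_mk (PsiFull_cont φ₀ φ₁ H₀ H₁ hH₀c hH₁c hH₀ hH₁) _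
  have hFbij : Function.Bijective F := by
    constructor
    · rintro ⟨t, θ, z⟩ ⟨s, σ, w⟩ hxy
      have h1 : t = s := congrArg Prod.fst hxy
      have h2 : θ = σ := congrArg (Prod.fst ∘ Prod.snd) hxy
      have h3 : PsiFull φ₀ φ₁ H₀ H₁ (t, θ, z) = PsiFull φ₀ φ₁ H₀ H₁ (s, σ, w) :=
        congrArg (Subtype.val ∘ Prod.snd ∘ Prod.snd) hxy
      subst h1; subst h2
      unfold PsiFull at h3
      simp only at h3
      by_cases hc : (t:ℝ) ≤ 1/2
      · rw [if_pos hc, if_pos hc] at h3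
        have := Psi_injOn φ₀ hp₀ H₀ hH₀c hH₀ (r := 6*(t:ℝ))
          (by nlinarith [t.2.1]) θ z.2 w.2 h3
        rw [Subtype.ext this]
      · rw [if_neg hc, if_neg hc] at h3
        have := Psi_injOn φ₁ hp₁ H₁ hH₁c hH₁ (r := 6*(1-(t:ℝ)))
          (by nlinarith [t.2.2]) θ z.2 w.2 h3
        rw [Subtype.ext this]
    · rintro ⟨s, σ, w⟩
      by_cases hc : (s:ℝ) ≤ 1/2
      · obtain ⟨z, hzD, hz⟩ := Psi_surjOn φ₀ hp₀ H₀ hH₀c hH₀ (r := 6*(s:ℝ))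
          (by nlinarith [s.2.1]) σ w.2
        refine ⟨(s, σ, ⟨z, hzD⟩), ?_⟩
        refine Prod.ext rfl (Prod.ext rfl (Subtype.ext ?_))
        show PsiFull φ₀ φ₁ H₀ H₁ (s, σ, ⟨z, hzD⟩) = (w : ℂ)
        unfold PsiFull
        rw [if_pos hc]
        exact hz
      · obtain ⟨z, hzD, hz⟩ := Psi_surjOn φ₁ hp₁ H₁ hH₁c hH₁ (r := 6*(1-(s:ℝ)))
          (by nlinarith [s.2.2]) σ w.2
        refine ⟨(s, σ, ⟨z, hzD⟩), ?_⟩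
        refine Prod.ext rfl (Prod.ext rfl (Subtype.ext ?_))
        show PsiFull φ₀ φ₁ H₀ H₁ (s, σ, ⟨z, hzD⟩) = (w : ℂ)
        unfold PsiFull
        rw [if_neg hc]
        exact hz
  haveI : CompactSpace (↥S1) := isCompact_iff_compactSpace.mp (isCompact_sphere 0 1)
  haveI : CompactSpace (↥Disk) := isCompact_iff_compactSpace.mp (isCompact_closedBall 0 1)
  set e : (unitInterval × ↥S1 × ↥Disk) ≃ (unitInterval × ↥S1 × ↥Disk) :=
    Equiv.ofBijective F hFbij with he
  have hecont : Continuous e := hFcont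
  refine ⟨hecont.homeoOfEquivCompactToT2, ?_, ?_, ?_, ?_, ?_⟩
  · intro x; rfl
  · intro x; rfl
  · intro p
    show (F (0, p)).2 = φ₀ p
    refine Prod.ext ((hp₀ p).symm) (Subtype.ext ?_)
    show PsiFull φ₀ φ₁ H₀ H₁ (0, p) = ((φ₀ p).2 : ℂ)
    unfold PsiFull
    rw [if_pos (by norm_num)]
    have h6 : (6:ℝ) * ((0 : unitInterval):ℝ) = 0 := by norm_num
    rw [h6, Psi_zero φ₀ H₀ p.1 p.2]
  · intro p
    show (F (1, p)).2 = φ₁ p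
    refine Prod.ext ((hp₁ p).symm) (Subtype.ext ?_)
    show PsiFull φ₀ φ₁ H₀ H₁ (1, p) = ((φ₁ p).2 : ℂ)
    unfold PsiFull
    rw [if_neg (by norm_num)]
    have h6 : (6:ℝ) * (1 - ((1 : unitInterval):ℝ)) = 0 := by norm_num
    rw [h6, Psi_zero φ₁ H₁ p.1 p.2]
  · intro t p h13 h23
    show (F (t, p)).2 = p
    refine Prod.ext rfl (Subtype.ext ?_)
    show PsiFull φ₀ φ₁ H₀ H₁ (t, p) = (p.2 : ℂ)
    unfold PsiFull
    split_ifs with hc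
    · exact Psi_late φ₀ H₀ (by simp only; linarith) p.1 (p.2:ℂ)
    · exact Psi_late φ₁ H₁ (by simp only; push_neg at hc; linarith) p.1 (p.2:ℂ)
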